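/- Let k be an odd positive integer, S = ℤ/2kℤ, G = Aff(ℤ/2kℤ) the group of maps x ↦ vx + u with v a unit, and K₀ ≤ G the subgroup of affine maps with even translation part u. Then a subgroup H ≤ G has all orbits on S of even cardinality if and only if H is not contained in K₀. -/

import Mathlib

attribute [local instance] Classical.propDecidable


open Pointwise

def affPerm (n : ℕ) (u : ZMod n) (v : (ZMod n)ˣ) : Equiv.Perm (ZMod n) where
  toFun x := v * x + u
  invFun x := (v⁻¹ : (ZMod n)ˣ) * (x - u)
  left_inv x := by simp
  right_inv x := by simp

def Aff (n : ℕ) : Subgroup (Equiv.Perm (ZMod n)) where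
  carrier := {σ | ∃ u v, σ = affPerm n u v}
  one_mem' := ⟨0, 1, Equiv.ext fun x => by simp [affPerm]⟩
  mul_mem' := by
    rintro σ τ ⟨u1, v1, rfl⟩ ⟨u2, v2, rfl⟩
    exact ⟨v1 * u2 + u1, v1 * v2, Equiv.ext fun x => by
      simp [affPerm, Equiv.Perm.mul_apply, mul_add, mul_assoc, add_assoc]⟩
  inv_mem' := by
    rintro σ ⟨u, v, rfl⟩
    refine ⟨-(↑v⁻¹ * u), v⁻¹, Equiv.ext fun x => ?_⟩
    simp [affPerm, Equiv.Perm.inv_def, Equiv.symm, mul_sub, sub_eq_add_neg, mul_add, mul_neg]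

def AffK0 (n : ℕ) : Subgroup (Equiv.Perm (ZMod n)) where
  carrier := {σ | ∃ u v, Even u ∧ σ = affPerm n u v}
  one_mem' := ⟨0, 1, even_iff_two_dvd.mpr (dvd_zero _), Equiv.ext fun x => by simp [affPerm]⟩
  mul_mem' := by
    rintro σ τ ⟨u1, v1, hu1, rfl⟩ ⟨u2, v2, hu2, rfl⟩
    exact ⟨v1 * u2 + u1, v1 * v2, (hu2.mul_left _).add hu1, Equiv.ext fun x => by
      simp [affPerm, Equiv.Perm.mul_apply, mul_add, mul_assoc, add_assoc]⟩
  inv_mem' := by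
    rintro σ ⟨u, v, hu, rfl⟩
    refine ⟨-(↑v⁻¹ * u), v⁻¹, (hu.mul_left _).neg, Equiv.ext fun x => ?_⟩
    simp [affPerm, Equiv.Perm.inv_def, Equiv.symm, mul_sub, sub_eq_add_neg, mul_add, mul_neg]

lemma even_zmod_val_iff (k : ℕ) [NeZero (2*k)] (u : ZMod (2*k)) : Even u ↔ Even u.val := by
  constructor
  · rintro ⟨r, rfl⟩
    rw [ZMod.val_add, Nat.even_iff, Nat.mod_mod_of_dvd _ ⟨k, rfl⟩, ← Nat.even_iff]
    exact ⟨r.val, rfl⟩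
  · rintro ⟨m, hm⟩
    have h : ((u.val : ℕ) : ZMod (2*k)) = u := by rw [ZMod.natCast_val, ZMod.cast_id]
    rw [← h, hm]
    exact ⟨(m : ZMod (2*k)), by push_cast; ring⟩

lemma unit_val_odd (k : ℕ) [NeZero (2*k)] (v : (ZMod (2*k))ˣ) : ¬ Even ((v : ZMod (2*k)).val) := by
  have h1 : ((v : ZMod (2*k)) * (v⁻¹ : (ZMod (2*k))ˣ)).val = (1 : ZMod (2*k)).val := by
    rw [v.mul_inv]
  rw [ZMod.val_mul, ZMod.val_one_eq_one_mod] at h1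
  intro he
  have h2 : (2:ℕ) ∣ ((v : ZMod (2*k)).val * ((v⁻¹ : (ZMod (2*k))ˣ) : ZMod (2*k)).val) % (2*k) :=
    (Nat.dvd_mod_iff ⟨k, rfl⟩).mpr (he.two_dvd.mul_right _)
  rw [h1] at h2
  have h3 : (2:ℕ) ∣ 1 := (Nat.dvd_mod_iff ⟨k, rfl⟩).mp h2
  norm_num at h3

lemma even_mul_add_iff (k : ℕ) [NeZero (2*k)] (u : ZMod (2*k)) (v : (ZMod (2*k))ˣ) (x : ZMod (2*k)) :
    Even ((v : ZMod (2*k)) * x + u) ↔ (Even x ↔ Even u) := by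
  rw [even_zmod_val_iff, ZMod.val_add, Nat.even_iff, Nat.mod_mod_of_dvd _ ⟨k, rfl⟩,
    ← Nat.even_iff, Nat.even_add, ZMod.val_mul, Nat.even_iff, Nat.mod_mod_of_dvd _ ⟨k, rfl⟩,
    ← Nat.even_iff, Nat.even_mul]
  have hv := unit_val_odd k v
  rw [even_zmod_val_iff k x, even_zmod_val_iff k u]
  tauto

/-- For `k` odd, a subgroup `H ≤ Aff(ℤ/2kℤ)` has all orbits on `ℤ/2kℤ` of even cardinality
iff `H` is not contained in the even-translation subgroup `K₀`. -/
theorem stmt_4 (k : ℕ) (hk : Odd k) (hk0 : 0 < k) [NeZero (2 * k)]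
    (H : Subgroup (Equiv.Perm (ZMod (2 * k)))) (hH : H ≤ Aff (2 * k)) :
    (∀ x : ZMod (2 * k), Even (Nat.card (MulAction.orbit H x))) ↔ ¬ H ≤ AffK0 (2 * k) := by
  have hcardO : ∀ x : ZMod (2*k),
      Nat.card (MulAction.orbit H x) = (MulAction.orbit H x).toFinset.card := fun x => by
    rw [Nat.card_coe_set_eq, Set.ncard_eq_toFinset_card']
  constructor
  · -- all orbits even → ¬ H ≤ K₀
    intro hall hK
    set E : Finset (ZMod (2*k)) := Finset.univ.filter (fun x => Even x) with hE
    have hinv : ∀ x y : ZMod (2*k), Even x → y ∈ MulAction.orbit H x → Even y := by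
      rintro x y hx ⟨g, rfl⟩
      obtain ⟨u, v, hu, hg⟩ := hK g.2
      show Even ((g : Equiv.Perm (ZMod (2*k))) x)
      rw [hg]
      show Even ((v : ZMod (2*k)) * x + u)
      rw [even_mul_add_iff]
      exact iff_of_true hx hu
    -- |E| = k
    have hcardE : E.card = k := by
      have key : (Finset.range k).card = E.card := by
        apply Finset.card_bij (fun i _ => ((2*i : ℕ) : ZMod (2*k)))
        · intro i hi
          simp only [hE, Finset.mem_filter, Finset.mem_univ, true_and]
          exact ⟨(i : ZMod (2*k)), by push_cast; ring⟩
        · intro i hi j hj hij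
          rw [Finset.mem_range] at hi hj
          rw [ZMod.natCast_eq_natCast_iff] at hij
          have : 2*i % (2*k) = 2*j % (2*k) := hij
          rw [Nat.mod_eq_of_lt (by omega), Nat.mod_eq_of_lt (by omega)] at this
          omega
        · intro b hb
          simp only [hE, Finset.mem_filter, Finset.mem_univ, true_and] at hb
          obtain ⟨m, hm⟩ := (even_zmod_val_iff k b).mp hb
          have hblt : b.val < 2*k := ZMod.val_lt b
          refine ⟨m, Finset.mem_range.mpr (by omega), ?_⟩
          have h : ((b.val : ℕ) : ZMod (2*k)) = b := by rw [ZMod.natCast_val, ZMod.cast_id]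
          rw [← h, hm]; norm_num [two_mul]
      rw [← key, Finset.card_range]
    -- E has even cardinality: it is a union of orbits
    have heven : Even E.card := by
      set f : ZMod (2*k) → Quotient (MulAction.orbitRel H (ZMod (2*k))) :=
        fun y => Quotient.mk _ y with hf
      rw [Finset.card_eq_sum_card_fiberwise
        (fun x hx => Finset.mem_image_of_mem f hx : ∀ x ∈ E, f x ∈ E.image f)]
      apply Finset.even_sum
      intro q hq
      obtain ⟨x, hxE, rfl⟩ := Finset.mem_image.mp hq
      have hxeven : Even x := by
        simpa [hE] using hxE
      have : E.filter (fun y => f y = f x) = (MulAction.orbit H x).toFinset := by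
        ext y
        simp only [hE, Finset.mem_filter, Finset.mem_univ, true_and, Set.mem_toFinset, hf,
          Quotient.eq]
        rw [show (MulAction.orbitRel H (ZMod (2*k))).r y x ↔ y ∈ MulAction.orbit H x from
          MulAction.orbitRel_apply]
        exact ⟨fun h => h.2, fun h => ⟨hinv x y hxeven h, h⟩⟩
      rw [this, ← hcardO]
      exact hall x
    rw [hcardE] at heven
    exact (Nat.not_even_iff_odd.mpr hk) heven
  · -- ¬ H ≤ K₀ → all orbits even
    intro hK x
    obtain ⟨h, hhH, hhK⟩ := SetLike.not_le_iff_exists.mp hK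
    obtain ⟨u, v, hg⟩ := hH hhH
    have hu : ¬ Even u := fun he => hhK ⟨u, v, he, hg⟩
    have hflip : ∀ y : ZMod (2*k), Even (h y) ↔ ¬ Even y := by
      intro y
      rw [hg]
      show Even ((v : ZMod (2*k)) * y + u) ↔ _
      rw [even_mul_add_iff]
      tauto
    set O : Finset (ZMod (2*k)) := (MulAction.orbit H x).toFinset with hO
    have hmemO : ∀ y, y ∈ O ↔ y ∈ MulAction.orbit H x := fun y => Set.mem_toFinset
    have hstep : ∀ y ∈ O, h y ∈ O := by
      intro y hy
      rw [hmemO] at hy ⊢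
      rw [← MulAction.orbit_eq_iff.mpr hy]
      exact MulAction.mem_orbit y (⟨h, hhH⟩ : H)
    have hstep' : ∀ y ∈ O, h⁻¹ y ∈ O := by
      intro y hy
      rw [hmemO] at hy ⊢
      rw [← MulAction.orbit_eq_iff.mpr hy]
      exact MulAction.mem_orbit y ((⟨h, hhH⟩ : H)⁻¹)
    have hA : (O.filter (fun y => Even y)).card = (O.filter (fun y => ¬ Even y)).card := by
      apply Finset.card_bij' (fun y _ => h y) (fun y _ => h⁻¹ y)
      · intro y hy
        rw [Finset.mem_filter] at hy ⊢
        exact ⟨hstep y hy.1, by rw [hflip]; exact fun hc => hc hy.2⟩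
      · intro y hy
        rw [Finset.mem_filter] at hy ⊢
        refine ⟨hstep' y hy.1, ?_⟩
        have := hflip (h⁻¹ y)
        rw [show h (h⁻¹ y) = y from h.apply_symm_apply y] at this
        tauto
      · intro y hy
        exact h.symm_apply_apply y
      · intro y hy
        exact h.apply_symm_apply y
    rw [hcardO x]
    rw [← Finset.card_filter_add_card_filter_not (p := fun y => Even y) (s := O), hA]
    exact ⟨_, rfl⟩
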